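/- For every ℓ ≥ 1, the sequences defined by the mex recursion satisfy lim_{n→∞} a_n/n = φ and lim_{n→∞} b_n/n = φ², where φ = (1+√5)/2 is the golden ratio. -/
import Mathlib


/-- The minimum excluded value of a set of natural numbers. -/
noncomputable def mex (S : Set ℕ) : ℕ := sInf {m : ℕ | m ∉ S}

/-- `MexSeq ℓ a b` says that `a`, `b` are the sequences defined by
    `a 0 = ℓ+1`, `b 0 = 2ℓ+2`, and for `n ≥ 1`:
    `a n = mex({a i, b i : i < n} ∪ {0,…,ℓ})`, `b n = a n + n + ℓ + 1`. -/
def MexSeq (ℓ : ℕ) (a b : ℕ → ℕ) : Prop :=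
  a 0 = ℓ + 1 ∧ b 0 = 2 * ℓ + 2 ∧
  (∀ n : ℕ, 1 ≤ n →
    a n = mex ({m : ℕ | ∃ i < n, m = a i ∨ m = b i} ∪ {m : ℕ | m ≤ ℓ})) ∧
  (∀ n : ℕ, 1 ≤ n → b n = a n + n + ℓ + 1)

noncomputable def phi : ℝ := (1 + Real.sqrt 5) / 2
lemma mex_mem_of_lt {S : Set ℕ} {m : ℕ} (h : m < mex S) : m ∈ S := by
  by_contra hm
  exact absurd h (not_lt.mpr (Nat.sInf_le hm))

lemma mex_notMem {S : Set ℕ} (h : {m : ℕ | m ∉ S}.Nonempty) : mex S ∉ S :=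
  Nat.sInf_mem h

namespace MexAux

variable {ℓ : ℕ} {a b : ℕ → ℕ}

def S (ℓ : ℕ) (a b : ℕ → ℕ) (n : ℕ) : Set ℕ :=
  {m : ℕ | ∃ i < n, m = a i ∨ m = b i} ∪ {m : ℕ | m ≤ ℓ}

lemma mem_S_iff {n m : ℕ} :
    m ∈ S ℓ a b n ↔ (∃ i < n, m = a i ∨ m = b i) ∨ m ≤ ℓ := by
  simp [S, Set.mem_union, Set.mem_setOf_eq]

lemma compl_nonempty (n : ℕ) : {m : ℕ | m ∉ S ℓ a b n}.Nonempty := by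
  refine ⟨(Finset.range n).sup (fun i => a i + b i) + ℓ + 1, ?_⟩
  intro hm
  rw [mem_S_iff] at hm
  rcases hm with ⟨i, hi, h⟩ | h
  · have hle : a i + b i ≤ (Finset.range n).sup (fun i => a i + b i) :=
      Finset.le_sup (f := fun i => a i + b i) (Finset.mem_range.mpr hi)
    rcases h with h | h <;> omega
  · omega

lemma a_spec' (hab : MexSeq ℓ a b) {n : ℕ} (hn : 1 ≤ n) :
    a n ∉ S ℓ a b n ∧ ∀ m, m < a n → m ∈ S ℓ a b n := by
  have h := hab.2.2.1 n hn
  constructor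
  · rw [h]; exact mex_notMem (compl_nonempty n)
  · intro m hm; rw [h] at hm; exact mex_mem_of_lt hm

lemma a_gt (hab : MexSeq ℓ a b) (n : ℕ) : ℓ < a n := by
  rcases Nat.eq_zero_or_pos n with rfl | hn
  · rw [hab.1]; omega
  · by_contra h
    exact (a_spec' hab hn).1 (mem_S_iff.mpr (Or.inr (by omega)))

lemma b_eq (hab : MexSeq ℓ a b) (n : ℕ) : b n = a n + n + ℓ + 1 := by
  rcases Nat.eq_zero_or_pos n with rfl | hn
  · rw [hab.2.1, hab.1]; ring
  · exact hab.2.2.2 n hn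

lemma S_mono {i n : ℕ} (h : i ≤ n) : S ℓ a b i ⊆ S ℓ a b n := by
  intro m hm
  rw [mem_S_iff] at hm ⊢
  rcases hm with ⟨j, hj, hh⟩ | hh
  · exact Or.inl ⟨j, by omega, hh⟩
  · exact Or.inr hh

lemma a_lt_a (hab : MexSeq ℓ a b) {i n : ℕ} (hin : i < n) : a i < a n := by
  have hn : 1 ≤ n := by omega
  have hspec := a_spec' hab hn
  have hne : a n ≠ a i := fun he => hspec.1 (mem_S_iff.mpr (Or.inl ⟨i, hin, Or.inl he⟩))
  rcases Nat.eq_zero_or_pos i with rfl | hi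
  · have h1 := a_gt hab n
    have h0 := hab.1
    omega
  · have h := hab.2.2.1 i hi
    have hni : a n ∉ S ℓ a b i := fun hmem => hspec.1 (S_mono (by omega) hmem)
    have : a i ≤ a n := by rw [h]; exact Nat.sInf_le hni
    omega

lemma a_mono (hab : MexSeq ℓ a b) : StrictMono a := fun _ _ h => a_lt_a hab h

lemma a_ne_b (hab : MexSeq ℓ a b) (i j : ℕ) : a i ≠ b j := by
  rcases lt_or_ge j i with hji | hij
  · have hi : 1 ≤ i := by omega
    intro he
    exact (a_spec' hab hi).1 (mem_S_iff.mpr (Or.inl ⟨j, hji, Or.inr he⟩))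
  · have h1 : a i ≤ a j := (a_mono hab).monotone hij
    have h2 := b_eq hab j
    omega

lemma b_mono (hab : MexSeq ℓ a b) : StrictMono b := by
  intro i j h
  have h1 := b_eq hab i
  have h2 := b_eq hab j
  have := a_lt_a hab h
  omega

lemma b_gt (hab : MexSeq ℓ a b) (n : ℕ) : ℓ < b n := by
  have := b_eq hab n
  have := a_gt hab n
  omega

lemma key (hab : MexSeq ℓ a b) {n : ℕ} (hn : 1 ≤ n) :
    ∃ g, g ≤ n ∧ a n = n + ℓ + 1 + g ∧ a n < a g + g + ℓ + 1 ∧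
      ∀ g', g = g' + 1 → a g' + g' + ℓ + 1 < a n := by
  classical
  set F : Finset ℕ := (Finset.range n).filter (fun i => b i < a n) with hF
  have hcard_le : F.card ≤ n := by
    calc F.card ≤ (Finset.range n).card := Finset.card_filter_le _ _
    _ = n := Finset.card_range n
  have hset : Finset.range (a n) =
      (Finset.range (ℓ+1) ∪ (Finset.range n).image a) ∪ F.image b := by
    ext m
    simp only [Finset.mem_union, Finset.mem_range, Finset.mem_image, hF,
      Finset.mem_filter]
    constructor
    · intro hm
      have hmem := (a_spec' hab hn).2 m hm
      rw [mem_S_iff] at hmem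
      rcases hmem with ⟨i, hi, h | h⟩ | h
      · exact Or.inl (Or.inr ⟨i, hi, h.symm⟩)
      · exact Or.inr ⟨i, ⟨hi, by omega⟩, h.symm⟩
      · exact Or.inl (Or.inl (by omega))
    · rintro ((hm | ⟨i, hi, rfl⟩) | ⟨i, ⟨hi, hbi⟩, rfl⟩)
      · have := a_gt hab n; omega
      · exact a_lt_a hab hi
      · exact hbi
  have hinj_a : ((Finset.range n).image a).card = n := by
    rw [Finset.card_image_of_injective _ (a_mono hab).injective, Finset.card_range]
  have hinj_b : (F.image b).card = F.card :=
    Finset.card_image_of_injective _ (b_mono hab).injective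
  have hd1 : Disjoint (Finset.range (ℓ+1)) ((Finset.range n).image a) := by
    rw [Finset.disjoint_left]
    rintro m hm1 hm2
    rw [Finset.mem_range] at hm1
    rw [Finset.mem_image] at hm2
    obtain ⟨i, _, rfl⟩ := hm2
    have := a_gt hab i
    omega
  have hd2 : Disjoint (Finset.range (ℓ+1) ∪ (Finset.range n).image a) (F.image b) := by
    rw [Finset.disjoint_left]
    rintro m hm1 hm2
    rw [Finset.mem_image] at hm2
    obtain ⟨j, _, rfl⟩ := hm2
    rcases Finset.mem_union.mp hm1 with h | h
    · rw [Finset.mem_range] at h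
      have := b_gt hab j
      omega
    · rw [Finset.mem_image] at h
      obtain ⟨i, _, he⟩ := h
      exact a_ne_b hab i j he
  have hcount : a n = n + ℓ + 1 + F.card := by
    have h1 : (Finset.range (a n)).card = a n := Finset.card_range _
    rw [hset, Finset.card_union_of_disjoint hd2, Finset.card_union_of_disjoint hd1,
      Finset.card_range, hinj_a, hinj_b] at h1
    omega
  refine ⟨F.card, hcard_le, hcount, ?_, ?_⟩
  · -- a n < b (F.card)
    have hbg : a n < b F.card := by
      rcases eq_or_lt_of_le hcard_le with he | hlt
      · rw [he, b_eq hab n]; omega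
      · rcases lt_or_ge (a n) (b F.card) with h | h
        · exact h
        · exfalso
          have hne : a F.card ≠ b F.card := a_ne_b hab _ _
          have hblt : b F.card < a n := by
            rcases lt_or_eq_of_le h with h' | h'
            · exact h'
            · exact absurd h'.symm (a_ne_b hab n F.card)
          have hsub : Finset.range (F.card + 1) ⊆ F := by
            intro i hi
            rw [Finset.mem_range] at hi
            rw [hF, Finset.mem_filter, Finset.mem_range]
            constructor
            · omega
            · have : b i ≤ b F.card := (b_mono hab).monotone (by omega)
              omega
          have := Finset.card_le_card hsub
          rw [Finset.card_range] at this
          omega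
    rw [b_eq hab] at hbg
    exact hbg
  · intro g' hg'
    have hbg' : b g' < a n := by
      by_contra h
      push_neg at h
      have hsub : F ⊆ Finset.range g' := by
        intro i hi
        rw [hF, Finset.mem_filter] at hi
        rw [Finset.mem_range]
        have : b i < b g' := lt_of_lt_of_le hi.2 h
        exact (b_mono hab).lt_iff_lt.mp this
      have := Finset.card_le_card hsub
      rw [Finset.card_range] at this
      omega
    rw [b_eq hab] at hbg'
    exact hbg'

end MexAux


lemma phi_sq : phi ^ 2 = phi + 1 := by
  have h5 : Real.sqrt 5 ^ 2 = 5 := Real.sq_sqrt (by norm_num)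
  unfold phi
  linear_combination h5 / 4

lemma phi_ge : (3:ℝ)/2 ≤ phi := by
  have h5 : Real.sqrt 5 ^ 2 = 5 := Real.sq_sqrt (by norm_num)
  have hnn := Real.sqrt_nonneg 5
  have h2 : 2 ≤ Real.sqrt 5 := by nlinarith
  unfold phi; linarith

lemma phi_le : phi ≤ 2 := by
  have h5 : Real.sqrt 5 ^ 2 = 5 := Real.sq_sqrt (by norm_num)
  have hnn := Real.sqrt_nonneg 5
  have h3 : Real.sqrt 5 ≤ 3 := by nlinarith
  unfold phi; linarith

lemma phi_pos : (0:ℝ) < phi := lt_of_lt_of_le (by norm_num) phi_ge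

namespace MexAux

variable {ℓ : ℕ} {a b : ℕ → ℕ}

lemma bounds (hab : MexSeq ℓ a b) (n : ℕ) :
    (n:ℝ) * phi - 2 < a n ∧ (a n : ℝ) < n * phi + (ℓ + 4) := by
  induction n using Nat.strong_induction_on with
  | _ n ih =>
    have hφ2 := phi_sq
    have hφ32 := phi_ge
    have hφle := phi_le
    have hφpos := phi_pos
    have hℓnn : (0:ℝ) ≤ (ℓ:ℝ) := Nat.cast_nonneg ℓ
    have hnnn : (0:ℝ) ≤ (n:ℝ) := Nat.cast_nonneg n
    rcases Nat.eq_zero_or_pos n with rfl | hn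
    · rw [hab.1]; push_cast; constructor <;> nlinarith
    · obtain ⟨g, hgn, hcnt, hI, hII⟩ := key hab hn
      have hcntR : (a n : ℝ) = n + ℓ + 1 + g := by exact_mod_cast hcnt
      constructor
      · -- lower bound
        rcases eq_or_lt_of_le hgn with he | hglt
        · -- g = n : a n = 2n + ℓ + 1
          subst he
          have hnphi : (g:ℝ) * phi ≤ (g:ℝ) * 2 :=
            mul_le_mul_of_nonneg_left hφle (Nat.cast_nonneg g)
          nlinarith
        · have ihg := (ih g hglt).2
          have hIR : (a n : ℝ) < a g + g + ℓ + 1 := by exact_mod_cast hI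
          have hgR : (g:ℝ) = (a n : ℝ) - n - ℓ - 1 := by linarith
          have e1 : (g:ℝ) * phi = (a n : ℝ) * phi - n * phi - ℓ * phi - phi := by
            rw [hgR]; ring
          -- H : a n * phi > n*phi + ℓ*phi + phi + n - ℓ - 4
          have H : (n:ℝ) * phi + ℓ * phi + phi + n - ℓ - 4 < (a n : ℝ) * phi := by
            linarith
          by_contra hcon
          push_neg at hcon
          have hmul : (a n : ℝ) * phi ≤ ((n:ℝ) * phi - 2) * phi :=
            mul_le_mul_of_nonneg_right hcon (le_of_lt hφpos)
          have e3 : ((n:ℝ) * phi - 2) * phi = (n:ℝ) * phi + n - 2 * phi := by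
            linear_combination (n:ℝ) * hφ2
          have hlphi : (ℓ:ℝ) * (3/2) ≤ (ℓ:ℝ) * phi :=
            mul_le_mul_of_nonneg_left hφ32 hℓnn
          linarith
      · -- upper bound
        rcases Nat.eq_zero_or_pos g with rfl | hg
        · have hnphi : (n:ℝ) * 1 ≤ (n:ℝ) * phi :=
            mul_le_mul_of_nonneg_left (by linarith) hnnn
          push_cast at hcntR
          nlinarith
        · obtain ⟨g', rfl⟩ : ∃ g', g = g' + 1 := ⟨g - 1, by omega⟩
          have hg'n : g' < n := by omega
          have ihg' := (ih g' hg'n).1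
          have hIIR : (a g' : ℝ) + g' + ℓ + 1 < a n := by exact_mod_cast hII g' rfl
          have hg'R : (g':ℝ) = (a n : ℝ) - n - ℓ - 2 := by
            have : ((g' : ℕ) : ℝ) + 1 = ((g' + 1 : ℕ) : ℝ) := by push_cast; ring
            push_cast at hcntR; linarith
          have e1 : (g':ℝ) * phi = (a n : ℝ) * phi - n * phi - ℓ * phi - 2 * phi := by
            rw [hg'R]; ring
          -- H : a n * phi < n*phi + ℓ*phi + 2*phi + n + 3
          have H : (a n : ℝ) * phi < (n:ℝ) * phi + ℓ * phi + 2 * phi + n + 3 := by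
            linarith
          by_contra hcon
          push_neg at hcon
          have hmul : ((n:ℝ) * phi + ((ℓ:ℝ) + 4)) * phi ≤ (a n : ℝ) * phi :=
            mul_le_mul_of_nonneg_right hcon (le_of_lt hφpos)
          have e3 : ((n:ℝ) * phi + ((ℓ:ℝ) + 4)) * phi
              = (n:ℝ) * phi + n + (ℓ:ℝ) * phi + 4 * phi := by
            linear_combination (n:ℝ) * hφ2
          linarith

end MexAux

open Filter

theorem mexSeq_limits (ℓ : ℕ) (hℓ : 1 ≤ ℓ) (a b : ℕ → ℕ)
    (hab : MexSeq ℓ a b) :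
    Filter.Tendsto (fun n : ℕ => (a n : ℝ) / n) Filter.atTop (nhds phi) ∧
    Filter.Tendsto (fun n : ℕ => (b n : ℝ) / n) Filter.atTop (nhds (phi ^ 2)) := by
  have hbnd := MexAux.bounds hab
  have ha : Filter.Tendsto (fun n : ℕ => (a n : ℝ) / n) Filter.atTop (nhds phi) := by
    have hlow : Tendsto (fun n : ℕ => phi - 2 / n) atTop (nhds phi) := by
      have h0 : Tendsto (fun n : ℕ => (2:ℝ) / n) atTop (nhds 0) :=
        tendsto_const_div_atTop_nhds_zero_nat 2
      simpa using tendsto_const_nhds.sub h0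
    have hup : Tendsto (fun n : ℕ => phi + ((ℓ:ℝ) + 4) / n) atTop (nhds phi) := by
      have h0 : Tendsto (fun n : ℕ => ((ℓ:ℝ) + 4) / n) atTop (nhds 0) :=
        tendsto_const_div_atTop_nhds_zero_nat _
      simpa using tendsto_const_nhds.add h0
    refine tendsto_of_tendsto_of_tendsto_of_le_of_le' hlow hup ?_ ?_
    · filter_upwards [eventually_ge_atTop 1] with n hn
      have hn0 : (0:ℝ) < n := by exact_mod_cast Nat.lt_of_lt_of_le Nat.zero_lt_one hn
      rw [le_div_iff₀ hn0, sub_mul, div_mul_cancel₀ _ (ne_of_gt hn0)]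
      have := (hbnd n).1
      nlinarith
    · filter_upwards [eventually_ge_atTop 1] with n hn
      have hn0 : (0:ℝ) < n := by exact_mod_cast Nat.lt_of_lt_of_le Nat.zero_lt_one hn
      rw [div_le_iff₀ hn0, add_mul, div_mul_cancel₀ _ (ne_of_gt hn0)]
      have := (hbnd n).2
      nlinarith
  refine ⟨ha, ?_⟩
  have h1 : Tendsto (fun n : ℕ => (a n : ℝ) / n + (1 + ((ℓ:ℝ) + 1) / n)) atTop
      (nhds (phi + (1 + 0))) :=
    ha.add (tendsto_const_nhds.add (tendsto_const_div_atTop_nhds_zero_nat _))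
  have heq : phi + (1 + 0) = phi ^ 2 := by rw [phi_sq]; ring
  rw [heq] at h1
  refine h1.congr' ?_
  filter_upwards [eventually_ge_atTop 1] with n hn
  have hn0 : (0:ℝ) < n := by exact_mod_cast Nat.lt_of_lt_of_le Nat.zero_lt_one hn
  have hb : (b n : ℝ) = (a n : ℝ) + n + ℓ + 1 := by
    have := MexAux.b_eq hab n
    exact_mod_cast this
  rw [hb]
  field_simp
  ring
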